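/- The β-deformed Virasoro operators 𝓛̂_n = ∑_{k≥1} k t_k ∂/∂t_{k+n} + β ∑_{k=0}^n (∂/∂t_k)(∂/∂t_{n-k}) + (1-β)(n+1) ∂/∂t_n, for n ≥ -1, satisfy [𝓛̂_n, 𝓛̂_m] = (n - m) 𝓛̂_{n+m} as operators on ℝ[t_0, t_1, ...]. -/

import Mathlib

open MvPolynomial

/-- The β-deformed Virasoro operator
`𝓛̂_n = ∑_{k≥1} k t_k ∂/∂t_{k+n} + β ∑_{k=0}^n ∂/∂t_k ∂/∂t_{n-k} + (1-β)(n+1) ∂/∂t_n`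
acting on polynomials in `t_0, t_1, t_2, ...` (for `n ≥ -1`; for `n = -1` the second
sum is empty and the third term has coefficient `0`). -/
noncomputable def Lbeta (β : ℝ) (n : ℤ) (P : MvPolynomial ℕ ℝ) : MvPolynomial ℕ ℝ :=
  (∑ᶠ k : ℕ, if 1 ≤ k then (k : ℝ) • (X k * pderiv (((k : ℤ) + n).toNat) P) else 0) +
    β • ∑ k ∈ Finset.range ((n + 1).toNat), pderiv k (pderiv (n.toNat - k) P) +
    ((1 - β) * ((n : ℝ) + 1)) • pderiv n.toNat P

namespace BetaVir

open Finset


/-- Commutativity of partial derivatives. -/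
theorem pd_comm (i j : ℕ) (Q : MvPolynomial ℕ ℝ) :
    pderiv i (pderiv j Q) = pderiv j (pderiv i Q) := by
  induction Q using MvPolynomial.induction_on' with
  | monomial s a =>
    rcases eq_or_ne i j with rfl | hij
    · rfl
    · simp only [pderiv_monomial, Finsupp.tsub_apply, Finsupp.single_eq_of_ne' hij,
        Finsupp.single_eq_of_ne' hij.symm, tsub_zero]
      rw [tsub_tsub, tsub_tsub, add_comm (Finsupp.single j 1)]
      ring_nf
  | add p q hp hq => simp only [map_add, hp, hq]

theorem pdX_mul (i j : ℕ) (Q : MvPolynomial ℕ ℝ) :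
    pderiv i (X j * Q) = (if i = j then Q else 0) + X j * pderiv i Q := by
  rw [pderiv_mul]
  classical
  simp only [pderiv_X, Pi.single_apply]
  split_ifs with h1 h2 h3 <;> simp_all


noncomputable def opA (N a : ℕ) (Q : MvPolynomial ℕ ℝ) : MvPolynomial ℕ ℝ :=
  ∑ k ∈ Finset.range N, (k : ℝ) • (X k * pderiv (k + a - 1) Q)

noncomputable def opB (a : ℕ) (Q : MvPolynomial ℕ ℝ) : MvPolynomial ℕ ℝ :=
  ∑ k ∈ Finset.range a, pderiv k (pderiv (a - 1 - k) Q)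

noncomputable def LN (β : ℝ) (N a : ℕ) (Q : MvPolynomial ℕ ℝ) : MvPolynomial ℕ ℝ :=
  opA N a Q + β • opB a Q + ((1 - β) * a) • pderiv (a - 1) Q

theorem opA_add (N a : ℕ) (Q R : MvPolynomial ℕ ℝ) :
    opA N a (Q + R) = opA N a Q + opA N a R := by
  simp [opA, map_add, mul_add, smul_add, Finset.sum_add_distrib]

theorem opA_smul (N a : ℕ) (c : ℝ) (Q : MvPolynomial ℕ ℝ) :
    opA N a (c • Q) = c • opA N a Q := by
  simp only [opA, Finset.smul_sum]
  refine Finset.sum_congr rfl fun k _ => ?_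
  rw [Derivation.map_smul, mul_smul_comm, smul_comm]

theorem opB_add (a : ℕ) (Q R : MvPolynomial ℕ ℝ) :
    opB a (Q + R) = opB a Q + opB a R := by
  simp [opB, map_add, Finset.sum_add_distrib]

theorem opB_smul (a : ℕ) (c : ℝ) (Q : MvPolynomial ℕ ℝ) :
    opB a (c • Q) = c • opB a Q := by
  simp [opB, map_smul, Finset.smul_sum]

theorem opA_opA (a b N : ℕ) (P : MvPolynomial ℕ ℝ)
    (hP : ∀ j, N ≤ j + 2 → pderiv j P = 0) (hab : 1 ≤ a + b) :
    opA N a (opA N b P) =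
      (∑ k ∈ range N, ((k : ℝ) * ((k + a - 1 : ℕ) : ℝ)) • (X k * pderiv (k + (a + b - 1) - 1) P))
      + ∑ k ∈ range N, ∑ l ∈ range N,
          ((k : ℝ) * (l : ℝ)) • (X k * (X l * pderiv (k + a - 1) (pderiv (l + b - 1) P))) := by
  rw [opA, ← sum_add_distrib]
  refine Finset.sum_congr rfl fun k hk => ?_
  -- expand pderiv (k+a-1) of the inner sum
  rw [opA, map_sum]
  have hterm : ∀ l ∈ range N,
      pderiv (k + a - 1) ((l : ℝ) • (X l * pderiv (l + b - 1) P)) =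
      (if k + a - 1 = l then (l : ℝ) • pderiv (l + b - 1) P else 0)
        + (l : ℝ) • (X l * pderiv (k + a - 1) (pderiv (l + b - 1) P)) := by
    intro l _
    rw [Derivation.map_smul, pdX_mul, smul_add]
    congr 1
    split_ifs <;> simp
  rw [Finset.sum_congr rfl hterm, sum_add_distrib]
  have hdelta : (∑ l ∈ range N, if k + a - 1 = l then (l : ℝ) • pderiv (l + b - 1) P else 0)
      = if k + a - 1 ∈ range N then ((k + a - 1 : ℕ) : ℝ) • pderiv ((k + a - 1) + b - 1) P
        else 0 := by
    rw [Finset.sum_ite_eq]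
  rw [hdelta, mul_add, smul_add]
  congr 1
  · -- delta part
    rcases Nat.eq_zero_or_pos k with rfl | hkpos
    · simp
    · have hidx : (k + a - 1) + b - 1 = k + (a + b - 1) - 1 := by omega
      rw [hidx]
      split_ifs with h
      · rw [mul_smul_comm, smul_smul]
      · have : pderiv (k + (a + b - 1) - 1) P = 0 := by
          apply hP
          simp only [Finset.mem_range, not_lt] at h
          omega
        simp [this]
  · -- double part
    rw [Finset.mul_sum, Finset.smul_sum]
    refine Finset.sum_congr rfl fun l _ => ?_
    rw [mul_smul_comm, smul_smul]

theorem commAA (a b N : ℕ) (P : MvPolynomial ℕ ℝ)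
    (hP : ∀ j, N ≤ j + 2 → pderiv j P = 0) (hab : 1 ≤ a + b) :
    opA N a (opA N b P) - opA N b (opA N a P) = ((a : ℝ) - b) • opA N (a + b - 1) P := by
  rw [opA_opA a b N P hP hab, opA_opA b a N P hP (by omega)]
  have hdouble : (∑ k ∈ range N, ∑ l ∈ range N,
        ((k : ℝ) * (l : ℝ)) • (X k * (X l * pderiv (k + b - 1) (pderiv (l + a - 1) P))))
      = ∑ k ∈ range N, ∑ l ∈ range N,
        ((k : ℝ) * (l : ℝ)) • (X k * (X l * pderiv (k + a - 1) (pderiv (l + b - 1) P))) := by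
    rw [Finset.sum_comm]
    refine Finset.sum_congr rfl fun k _ => Finset.sum_congr rfl fun l _ => ?_
    rw [pd_comm, mul_comm ((l:ℝ)) k, mul_left_comm (X l) (X k)]
  have hba : b + a - 1 = a + b - 1 := by omega
  rw [hba, hdouble]
  rw [add_sub_add_right_eq_sub, ← Finset.sum_sub_distrib, opA, Finset.smul_sum]
  refine Finset.sum_congr rfl fun k hk => ?_
  rw [← sub_smul, smul_smul]
  congr 1
  rcases Nat.eq_zero_or_pos k with rfl | hkpos
  · simp
  · rw [Nat.cast_sub (by omega : 1 ≤ k + a), Nat.cast_sub (by omega : 1 ≤ k + b)]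
    push_cast
    ring

theorem opA_opB (a b N : ℕ) (P : MvPolynomial ℕ ℝ) :
    opA N a (opB b P) = ∑ k ∈ range N, ∑ j ∈ range b,
      (k : ℝ) • (X k * pderiv (k + a - 1) (pderiv j (pderiv (b - 1 - j) P))) := by
  rw [opA]
  refine Finset.sum_congr rfl fun k _ => ?_
  rw [opB, map_sum, Finset.mul_sum, Finset.smul_sum]

theorem opB_opA (a b N : ℕ) (P : MvPolynomial ℕ ℝ) (hb : b ≤ N) :
    opB b (opA N a P) =
      (∑ j ∈ range b, ((b - 1 - j : ℕ) : ℝ) • pderiv j (pderiv ((b - 1 - j) + a - 1) P))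
      + (∑ j ∈ range b, (j : ℝ) • pderiv (b - 1 - j) (pderiv (j + a - 1) P))
      + ∑ j ∈ range b, ∑ k ∈ range N,
          (k : ℝ) • (X k * pderiv j (pderiv (b - 1 - j) (pderiv (k + a - 1) P))) := by
  rw [opB, ← sum_add_distrib, ← sum_add_distrib]
  refine Finset.sum_congr rfl fun j hj => ?_
  have hjb : j < b := Finset.mem_range.mp hj
  have hinner : pderiv (b - 1 - j) (opA N a P) =
      ((b - 1 - j : ℕ) : ℝ) • pderiv ((b - 1 - j) + a - 1) P
      + ∑ k ∈ range N, (k : ℝ) • (X k * pderiv (b - 1 - j) (pderiv (k + a - 1) P)) := by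
    rw [opA, map_sum]
    have : ∀ k ∈ range N, pderiv (b - 1 - j) ((k : ℝ) • (X k * pderiv (k + a - 1) P)) =
        (if b - 1 - j = k then (k : ℝ) • pderiv (k + a - 1) P else 0)
        + (k : ℝ) • (X k * pderiv (b - 1 - j) (pderiv (k + a - 1) P)) := by
      intro k _
      rw [Derivation.map_smul, pdX_mul, smul_add]
      congr 1
      split_ifs <;> simp
    rw [Finset.sum_congr rfl this, sum_add_distrib, Finset.sum_ite_eq,
      if_pos (Finset.mem_range.mpr (by omega : b - 1 - j < N))]
  rw [hinner, map_add, Derivation.map_smul, map_sum]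
  have : ∀ k ∈ range N, pderiv j ((k : ℝ) • (X k * pderiv (b - 1 - j) (pderiv (k + a - 1) P))) =
      (if j = k then (k : ℝ) • pderiv (b - 1 - j) (pderiv (k + a - 1) P) else 0)
      + (k : ℝ) • (X k * pderiv j (pderiv (b - 1 - j) (pderiv (k + a - 1) P))) := by
    intro k _
    rw [Derivation.map_smul, pdX_mul, smul_add]
    congr 1
    split_ifs <;> simp
  rw [Finset.sum_congr rfl this, sum_add_distrib, Finset.sum_ite_eq,
    if_pos (Finset.mem_range.mpr (by omega : j < N))]
  abel

theorem commAB (a b N : ℕ) (P : MvPolynomial ℕ ℝ) (hb : b ≤ N) :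
    opA N a (opB b P) - opB b (opA N a P) =
      -(2 : ℝ) • ∑ j ∈ Finset.range b,
        ((b - 1 - j : ℕ) : ℝ) • pderiv j (pderiv (a + b - 2 - j) P) := by
  rw [opA_opB a b N P, opB_opA a b N P hb]
  have hdouble : (∑ k ∈ range N, ∑ j ∈ range b,
      (k : ℝ) • (X k * pderiv (k + a - 1) (pderiv j (pderiv (b - 1 - j) P))))
      = ∑ j ∈ range b, ∑ k ∈ range N,
      (k : ℝ) • (X k * pderiv j (pderiv (b - 1 - j) (pderiv (k + a - 1) P))) := by
    rw [Finset.sum_comm]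
    refine Finset.sum_congr rfl fun j _ => Finset.sum_congr rfl fun k _ => ?_
    rw [pd_comm (k + a - 1) j, pd_comm (k + a - 1) (b - 1 - j)]
  rw [hdouble]
  have h1 : (∑ j ∈ range b, ((b - 1 - j : ℕ) : ℝ) • pderiv j (pderiv ((b - 1 - j) + a - 1) P))
      = ∑ j ∈ range b, ((b - 1 - j : ℕ) : ℝ) • pderiv j (pderiv (a + b - 2 - j) P) := by
    refine Finset.sum_congr rfl fun j hj => ?_
    have hjb : j < b := Finset.mem_range.mp hj
    rcases Nat.eq_zero_or_pos (b - 1 - j) with h | h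
    · simp [h]
    · have : (b - 1 - j) + a - 1 = a + b - 2 - j := by omega
      rw [this]
  have h2 : (∑ j ∈ range b, (j : ℝ) • pderiv (b - 1 - j) (pderiv (j + a - 1) P))
      = ∑ j ∈ range b, ((b - 1 - j : ℕ) : ℝ) • pderiv j (pderiv (a + b - 2 - j) P) := by
    rw [← Finset.sum_range_reflect]
    refine Finset.sum_congr rfl fun j hj => ?_
    have hjb : j < b := Finset.mem_range.mp hj
    have e1 : b - 1 - (b - 1 - j) = j := by omega
    rw [e1]
    rcases Nat.eq_zero_or_pos (b - 1 - j) with h | h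
    · simp [h]
    · have : (b - 1 - j) + a - 1 = a + b - 2 - j := by omega
      rw [this]
  rw [h1, h2, neg_smul, two_smul]
  abel

theorem commAD (a b N : ℕ) (P : MvPolynomial ℕ ℝ) (hb : b ≤ N) (hN : 1 ≤ N) :
    opA N a (pderiv (b - 1) P) - pderiv (b - 1) (opA N a P) =
      -((b - 1 : ℕ) : ℝ) • pderiv (a + b - 2) P := by
  have hexp : pderiv (b - 1) (opA N a P) =
      ((b - 1 : ℕ) : ℝ) • pderiv ((b - 1) + a - 1) P + opA N a (pderiv (b - 1) P) := by
    rw [opA, map_sum]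
    have : ∀ k ∈ range N, pderiv (b - 1) ((k : ℝ) • (X k * pderiv (k + a - 1) P)) =
        (if b - 1 = k then (k : ℝ) • pderiv (k + a - 1) P else 0)
        + (k : ℝ) • (X k * pderiv (k + a - 1) (pderiv (b - 1) P)) := by
      intro k _
      rw [Derivation.map_smul, pdX_mul, smul_add, pd_comm (b-1) (k + a - 1)]
      congr 1
      split_ifs <;> simp
    rw [Finset.sum_congr rfl this, sum_add_distrib, Finset.sum_ite_eq,
      if_pos (Finset.mem_range.mpr (by omega : b - 1 < N)), opA]
  rw [hexp]
  rcases Nat.eq_zero_or_pos (b - 1) with h | h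
  · simp [h]
  · have : (b - 1) + a - 1 = a + b - 2 := by omega
    rw [this, neg_smul]
    abel

theorem opB_pd (a i : ℕ) (Q : MvPolynomial ℕ ℝ) :
    opB a (pderiv i Q) = pderiv i (opB a Q) := by
  rw [opB, opB, map_sum]
  refine Finset.sum_congr rfl fun k _ => ?_
  rw [pd_comm i k, pd_comm i (a - 1 - k)]

theorem opB_opB (a b : ℕ) (Q : MvPolynomial ℕ ℝ) :
    opB a (opB b Q) = opB b (opB a Q) := by
  have key : ∀ c d : ℕ, ∀ R : MvPolynomial ℕ ℝ, opB c (opB d R) =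
      ∑ k ∈ range c, ∑ j ∈ range d,
        pderiv k (pderiv (c - 1 - k) (pderiv j (pderiv (d - 1 - j) R))) := by
    intro c d R
    rw [opB]
    refine Finset.sum_congr rfl fun k _ => ?_
    rw [opB, map_sum, map_sum]
  rw [key, key, Finset.sum_comm]
  refine Finset.sum_congr rfl fun j _ => Finset.sum_congr rfl fun k _ => ?_
  rw [pd_comm (a - 1 - k) j (pderiv (b-1-j) Q), pd_comm (a - 1 - k) (b - 1 - j) Q,
    pd_comm k j (pderiv (b-1-j) (pderiv (a-1-k) Q)), pd_comm k (b-1-j) (pderiv (a-1-k) Q)]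

theorem symmetrize (K : ℕ) (S : ℕ → MvPolynomial ℕ ℝ) (f : ℕ → ℝ) (t : ℝ)
    (hS : ∀ c, c < K → S (K - 1 - c) = S c)
    (hf : ∀ c, c < K → f c + f (K - 1 - c) = 2 * t) :
    ∑ c ∈ range K, f c • S c = t • ∑ c ∈ range K, S c := by
  have h2 : (2 : ℝ) • (∑ c ∈ range K, f c • S c) = (2 : ℝ) • (t • ∑ c ∈ range K, S c) := by
    rw [two_smul]
    nth_rewrite 2 [← Finset.sum_range_reflect]
    rw [← sum_add_distrib]
    rw [smul_smul, Finset.smul_sum]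
    refine Finset.sum_congr rfl fun c hc => ?_
    have hcK : c < K := Finset.mem_range.mp hc
    rw [hS c hcK, ← add_smul, hf c hcK]
  have := congrArg (fun x => (2⁻¹ : ℝ) • x) h2
  simpa [smul_smul] using this

theorem coeff_pair (a b c : ℕ) (hc : c < a + b - 1) :
    (-2 * ((b - 1 - c : ℕ) : ℝ) + 2 * ((a - 1 - c : ℕ) : ℝ))
      + (-2 * ((b - 1 - (a + b - 1 - 1 - c) : ℕ) : ℝ)
          + 2 * ((a - 1 - (a + b - 1 - 1 - c) : ℕ) : ℝ))
      = 2 * ((a : ℝ) - b) := by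
  have hz : (-2 * ((b - 1 - c : ℕ) : ℤ) + 2 * ((a - 1 - c : ℕ) : ℤ))
      + (-2 * ((b - 1 - (a + b - 1 - 1 - c) : ℕ) : ℤ)
          + 2 * ((a - 1 - (a + b - 1 - 1 - c) : ℕ) : ℤ))
      = 2 * ((a : ℤ) - b) := by omega
  have := congrArg (fun z : ℤ => (z : ℝ)) hz
  push_cast at this
  linarith

theorem secondOrder (a b : ℕ) (P : MvPolynomial ℕ ℝ) :
    (-(2 : ℝ) • ∑ j ∈ range b, ((b - 1 - j : ℕ) : ℝ) • pderiv j (pderiv (a + b - 2 - j) P))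
      - (-(2 : ℝ) • ∑ j ∈ range a, ((a - 1 - j : ℕ) : ℝ) • pderiv j (pderiv (a + b - 2 - j) P))
      = ((a : ℝ) - b) • opB (a + b - 1) P := by
  set K := a + b - 1 with hK
  set S : ℕ → MvPolynomial ℕ ℝ := fun c => pderiv c (pderiv (a + b - 2 - c) P) with hSdef
  -- truncate both sums to range K
  have htrunc : ∀ d M : ℕ, d - 1 ≤ M → (∑ j ∈ range M, ((d - 1 - j : ℕ) : ℝ) • S j)
      = ∑ j ∈ range (d - 1), ((d - 1 - j : ℕ) : ℝ) • S j := by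
    intro d M hdM
    rw [← Finset.sum_subset (Finset.range_subset_range.mpr hdM)]
    intro x hx hnx
    simp only [Finset.mem_range, not_lt] at hx hnx
    have : d - 1 - x = 0 := by omega
    rw [this]
    simp
  have ha' : (∑ j ∈ range a, ((a - 1 - j : ℕ) : ℝ) • S j)
      = ∑ j ∈ range K, ((a - 1 - j : ℕ) : ℝ) • S j :=
    (htrunc a a (by omega)).trans (htrunc a K (by omega)).symm
  have hb' : (∑ j ∈ range b, ((b - 1 - j : ℕ) : ℝ) • S j)
      = ∑ j ∈ range K, ((b - 1 - j : ℕ) : ℝ) • S j :=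
    (htrunc b b (by omega)).trans (htrunc b K (by omega)).symm
  rw [ha', hb', Finset.smul_sum, Finset.smul_sum, ← Finset.sum_sub_distrib]
  have hcomb : ∀ j ∈ range K,
      (-(2:ℝ)) • (((b - 1 - j : ℕ) : ℝ) • S j) - (-(2:ℝ)) • (((a - 1 - j : ℕ) : ℝ) • S j)
      = (-2 * ((b - 1 - j : ℕ) : ℝ) + 2 * ((a - 1 - j : ℕ) : ℝ)) • S j := by
    intro j _
    rw [smul_smul, smul_smul, ← sub_smul]
    congr 1
    ring
  rw [Finset.sum_congr rfl hcomb]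
  have hopB : opB K P = ∑ c ∈ range K, S c := by
    rw [opB]
    refine Finset.sum_congr rfl fun c hc => ?_
    have : K - 1 - c = a + b - 2 - c := by omega
    rw [this]
  rw [hopB]
  apply symmetrize
  · intro c hcK
    simp only [hSdef]
    have e1 : a + b - 2 - (K - 1 - c) = c := by omega
    have e2 : K - 1 - c = a + b - 2 - c := by omega
    rw [e1, ← e2, pd_comm]
  · intro c hcK
    exact coeff_pair a b c (by omega)

theorem expL (β : ℝ) (N a b : ℕ) (P : MvPolynomial ℕ ℝ) :
    LN β N a (LN β N b P) =
      opA N a (opA N b P) + β • opA N a (opB b P)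
        + ((1 - β) * b) • opA N a (pderiv (b - 1) P)
        + β • opB a (opA N b P) + (β * β) • opB a (opB b P)
        + (β * ((1 - β) * b)) • opB a (pderiv (b - 1) P)
        + ((1 - β) * a) • pderiv (a - 1) (opA N b P)
        + (((1 - β) * a) * β) • pderiv (a - 1) (opB b P)
        + (((1 - β) * a) * ((1 - β) * b)) • pderiv (a - 1) (pderiv (b - 1) P) := by
  conv_lhs => rw [LN, LN]
  rw [opA_add, opA_add, opA_smul, opA_smul, opB_add, opB_add, opB_smul, opB_smul,
    map_add, map_add, Derivation.map_smul, Derivation.map_smul,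
    smul_add, smul_add, smul_add, smul_add]
  simp only [smul_smul]
  abel

theorem keyComm (β : ℝ) (a b N : ℕ) (ha : a ≤ N) (hb : b ≤ N) (P : MvPolynomial ℕ ℝ)
    (hP : ∀ j, N ≤ j + 2 → pderiv j P = 0) :
    LN β N a (LN β N b P) - LN β N b (LN β N a P) = ((a : ℝ) - b) • LN β N (a + b - 1) P := by
  rcases eq_or_ne a b with rfl | hne
  · simp
  have hN : 1 ≤ N := by omega
  have hab : 1 ≤ a + b := by omega
  have hAA := commAA a b N P hP hab
  have hABs := commAB a b N P hb
  have hBAs := commAB b a N P ha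
  have hADs := commAD a b N P hb hN
  have hDAs := commAD b a N P ha hN
  rw [show b + a = a + b from Nat.add_comm b a] at hBAs hDAs
  have hsec := secondOrder a b P
  have hBB := opB_opB a b P
  have hBDb := opB_pd a (b - 1) P
  have hBDa := opB_pd b (a - 1) P
  have hDD := pd_comm (a - 1) (b - 1) P
  have hco : ((1 - β) * (b : ℝ)) * (-((b - 1 : ℕ) : ℝ)) - ((1 - β) * (a : ℝ)) * (-((a - 1 : ℕ) : ℝ))
      = ((a : ℝ) - b) * ((1 - β) * ((a + b - 1 : ℕ) : ℝ)) := by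
    rcases Nat.eq_zero_or_pos a with rfl | hA <;> rcases Nat.eq_zero_or_pos b with rfl | hB
    · simp
    · rw [Nat.cast_sub hB, Nat.cast_sub (by omega : 1 ≤ 0 + b)]
      push_cast
      ring
    · rw [Nat.cast_sub hA, Nat.cast_sub (by omega : 1 ≤ a + 0)]
      push_cast
      ring
    · rw [Nat.cast_sub hA, Nat.cast_sub hB, Nat.cast_sub (by omega : 1 ≤ a + b)]
      push_cast
      ring
  have hfo : ((1 - β) * (b : ℝ)) • (-((b - 1 : ℕ) : ℝ) • pderiv (a + b - 2) P)
      - ((1 - β) * (a : ℝ)) • (-((a - 1 : ℕ) : ℝ) • pderiv (a + b - 2) P)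
      = ((a : ℝ) - b) • (((1 - β) * ((a + b - 1 : ℕ) : ℝ)) • pderiv (a + b - 2) P) := by
    rw [smul_smul, smul_smul, smul_smul, ← sub_smul, hco]
  rw [expL β N a b P, expL β N b a P]
  unfold LN
  rw [show a + b - 1 - 1 = a + b - 2 from by omega]
  linear_combination (norm := module) hAA + β • hABs - β • hBAs + β • hsec
    + ((1 - β) * (b : ℝ)) • hADs - ((1 - β) * (a : ℝ)) • hDAs + hfo
    + (β * β) • hBB + (β * ((1 - β) * (b : ℝ))) • hBDb
    - (((1 - β) * (a : ℝ)) * β) • hBDa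
    + (((1 - β) * (a : ℝ)) * ((1 - β) * (b : ℝ))) • hDD

theorem Lbeta_eq_LN (β : ℝ) (n : ℤ) (N : ℕ) (Q : MvPolynomial ℕ ℝ) (hn : -1 ≤ n)
    (hQ : ∀ j, N ≤ j + 1 → pderiv j Q = 0) :
    Lbeta β n Q = LN β N ((n + 1).toNat) Q := by
  set a := (n + 1).toNat with hadef
  have h0 : n.toNat = a - 1 := by omega
  rw [Lbeta, LN, opA, opB]
  have hfun : (fun k : ℕ => if 1 ≤ k then (k : ℝ) • (X k * pderiv (((k : ℤ) + n).toNat) Q) else 0)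
      = fun k : ℕ => (k : ℝ) • (X k * pderiv (k + a - 1) Q) := by
    funext k
    rcases Nat.eq_zero_or_pos k with rfl | hk
    · simp
    · rw [if_pos (by omega : 1 ≤ k)]
      have he : ((k : ℤ) + n).toNat = k + a - 1 := by omega
      rw [he]
  have h2 : ((n : ℝ) + 1) = (a : ℝ) := by
    have : ((n + 1 : ℤ)) = (a : ℤ) := by omega
    exact_mod_cast this
  rw [hfun, h0, h2]
  rw [finsum_eq_finset_sum_of_support_subset _ (s := Finset.range N)]
  · intro k hk
    simp only [Function.mem_support, ne_eq, not_not] at hk ⊢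
    by_contra h
    apply hk
    have : pderiv (k + a - 1) Q = 0 := by
      apply hQ
      by_contra hlt
      push_neg at hlt
      have : k < N := by omega
      exact h (Finset.mem_coe.mpr (Finset.mem_range.mpr this))
    simp [this]

theorem pderiv_LN (β : ℝ) (N a : ℕ) (Q : MvPolynomial ℕ ℝ)
    (hQ : ∀ j, N ≤ j + 2 → pderiv j Q = 0) :
    ∀ j, N ≤ j + 1 → pderiv j (LN β N a Q) = 0 := by
  intro j hj
  have hjQ : pderiv j Q = 0 := hQ j (by omega)
  rw [LN, map_add, map_add, Derivation.map_smul, Derivation.map_smul]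
  have h1 : pderiv j (opA N a Q) = 0 := by
    rw [opA, map_sum]
    apply Finset.sum_eq_zero
    intro k hk
    rw [Derivation.map_smul, pdX_mul, pd_comm, hjQ, map_zero, mul_zero, add_zero]
    split_ifs with h
    · subst h
      rw [hQ (j + a - 1) (by omega), smul_zero]
    · rw [smul_zero]
  have h2 : pderiv j (opB a Q) = 0 := by
    rw [opB, map_sum]
    apply Finset.sum_eq_zero
    intro k hk
    rw [pd_comm, pd_comm j (a - 1 - k), hjQ, map_zero, map_zero]
  have h3 : pderiv j (pderiv (a - 1) Q) = 0 := by
    rw [pd_comm, hjQ, map_zero]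
  rw [h1, h2, h3, smul_zero, smul_zero, add_zero, add_zero]

end BetaVir

/-- the β-deformed Virasoro operators satisfy
`[𝓛̂_n, 𝓛̂_m] = (n - m) 𝓛̂_{n+m}` for all `n, m ≥ -1`. -/
theorem beta_virasoro_commutator (β : ℝ) (n m : ℤ) (hn : -1 ≤ n) (hm : -1 ≤ m)
    (P : MvPolynomial ℕ ℝ) :
    Lbeta β n (Lbeta β m P) - Lbeta β m (Lbeta β n P) =
      ((n - m : ℤ) : ℝ) • Lbeta β (n + m) P := by
  classical
  rcases eq_or_ne n m with rfl | hne
  · simp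
  set N : ℕ := P.vars.sup id + 1 + (n + 1).toNat + (m + 1).toNat + 2 with hN
  have hPb : ∀ j, N ≤ j + 2 → pderiv j P = 0 := by
    intro j hj
    apply pderiv_eq_zero_of_notMem_vars
    intro hmem
    have := Finset.le_sup (f := id) hmem
    simp only [id] at this
    omega
  have hPb1 : ∀ j, N ≤ j + 1 → pderiv j P = 0 := fun j hj => hPb j (by omega)
  set a := (n + 1).toNat with hadef
  set b := (m + 1).toNat with hbdef
  have hm' : Lbeta β m P = BetaVir.LN β N b P := BetaVir.Lbeta_eq_LN β m N P hm hPb1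
  have hn' : Lbeta β n P = BetaVir.LN β N a P := BetaVir.Lbeta_eq_LN β n N P hn hPb1
  have hbnd1 : ∀ j, N ≤ j + 1 → pderiv j (BetaVir.LN β N b P) = 0 :=
    BetaVir.pderiv_LN β N b P hPb
  have hbnd2 : ∀ j, N ≤ j + 1 → pderiv j (BetaVir.LN β N a P) = 0 :=
    BetaVir.pderiv_LN β N a P hPb
  have hnm : (-1 : ℤ) ≤ n + m := by omega
  rw [hm', hn', BetaVir.Lbeta_eq_LN β n N _ hn hbnd1, BetaVir.Lbeta_eq_LN β m N _ hm hbnd2,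
    BetaVir.Lbeta_eq_LN β (n + m) N P hnm hPb1]
  have h1 : ((n + m + 1).toNat) = a + b - 1 := by omega
  have h2 : ((n - m : ℤ) : ℝ) = (a : ℝ) - b := by
    have : (n - m : ℤ) = (a : ℤ) - b := by omega
    rw [this]; push_cast; ring
  rw [h1, h2]
  have haN : a ≤ N := by omega
  have hbN : b ≤ N := by omega
  exact BetaVir.keyComm β a b N haN hbN P hPb
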